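/- Consider the oriented crown quiver Q_n with a homogeneous action of a finite group G given by a character χ_a : G → k^× attached to each arrow a. Then every vertex of Q_n is the source of exactly one irreducible invariant path and the target of exactly one irreducible invariant path; consequently the bases-quiver of the invariant category is a disjoint union of oriented crowns. -/

import Mathlib

/-!
STATEMENT 19: For the oriented crown quiver `Q_n` (vertices `ZMod n`, one arrow
`i ⟶ i+1`) with a homogeneous action of a finite group `G` given by a character
attached to each arrow, every vertex is the source of exactly one irreducible
invariant path and the target of exactly one irreducible invariant path (hence the
bases-quiver of the invariant category is a disjoint union of oriented crowns).
-/

open Quiver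

/-- The oriented crown with `n` vertices. -/
abbrev Crown (n : ℕ) := ZMod n

instance (n : ℕ) : Quiver.{0} (Crown n) :=
  ⟨fun i j => PLift ((i : ZMod n) + (1 : ZMod n) = (j : ZMod n))⟩

section

variable {k G : Type} [Field k] [Group G] {n : ℕ}

/-- The character of a path: product of the characters of its arrows. -/
def crownPathChar (χ : ∀ x y : Crown n, (x ⟶ y) → (G →* kˣ)) :
    ∀ {x y : Crown n}, Quiver.Path x y → G → kˣ
  | _, _, .nil => fun _ => 1
  | _, _, .cons p e => fun g => crownPathChar χ p g * χ _ _ e g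

/-- A path is invariant if its character is trivial. -/
def CrownInvPath (χ : ∀ x y : Crown n, (x ⟶ y) → (G →* kˣ)) {x y : Crown n}
    (w : Quiver.Path x y) : Prop :=
  ∀ g : G, crownPathChar χ w g = 1

/-- An invariant path of positive length is irreducible if it is not a concatenation
of two invariant paths of positive length. -/
def CrownIrrInvPath (χ : ∀ x y : Crown n, (x ⟶ y) → (G →* kˣ)) {x y : Crown n}
    (w : Quiver.Path x y) : Prop :=
  CrownInvPath χ w ∧ 0 < w.length ∧
    ¬ ∃ (z : Crown n) (w₁ : Quiver.Path x z) (w₂ : Quiver.Path z y),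
        0 < w₁.length ∧ 0 < w₂.length ∧ CrownInvPath χ w₁ ∧ CrownInvPath χ w₂ ∧
          w = w₁.comp w₂

end

section

variable {k G : Type} [Field k] [Group G] {n : ℕ}

/-- The canonical path of length `L` starting at `x`. -/
def crownPth (x : Crown n) : ℕ → Σ y : Crown n, Quiver.Path x y
  | 0 => ⟨x, Quiver.Path.nil⟩
  | L + 1 => ⟨(crownPth x L).1 + 1, (crownPth x L).2.cons ⟨rfl⟩⟩

/-- Transport of a path along an equality of its target. -/
def crownCast {a b c : Crown n} (h : b = c) (p : Quiver.Path a b) : Quiver.Path a c :=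
  h ▸ p

lemma crownPth_fst (x : Crown n) (L : ℕ) : (crownPth x L).1 = x + (L : ZMod n) := by
  induction L with
  | zero => simp [crownPth]
  | succ L ih => show (crownPth x L).1 + 1 = _; rw [ih]; push_cast; ring

lemma crownPth_len (x : Crown n) (L : ℕ) : (crownPth x L).2.length = L := by
  induction L with
  | zero => rfl
  | succ L ih => show ((crownPth x L).2.cons _).length = L + 1; exact congrArg Nat.succ ih

lemma crown_path_eq_pth {x : Crown n} : ∀ {y : Crown n} (p : Quiver.Path x y),
    (⟨y, p⟩ : Σ y : Crown n, Quiver.Path x y) = crownPth x p.length := by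
  intro y p
  induction p with
  | nil => rfl
  | @cons b c q e ih =>
    have hc : b + 1 = c := e.down
    subst hc
    rw [Quiver.Path.length_cons]
    show _ = (⟨(crownPth x q.length).1 + 1, (crownPth x q.length).2.cons ⟨rfl⟩⟩ :
      Σ y : Crown n, Quiver.Path x y)
    rw [← ih]
    have he : e = ⟨rfl⟩ := rfl
    rw [he]

lemma crownPth_add (v : Crown n) (L M : ℕ) :
    crownPth v (L + M) = ⟨(crownPth (crownPth v L).1 M).1,
      (crownPth v L).2.comp (crownPth (crownPth v L).1 M).2⟩ := by
  have h := crown_path_eq_pth ((crownPth v L).2.comp (crownPth (crownPth v L).1 M).2)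
  rw [Quiver.Path.length_comp, crownPth_len, crownPth_len] at h
  exact h.symm

lemma crownPathChar_cons (χ : ∀ x y : Crown n, (x ⟶ y) → (G →* kˣ)) {x y z : Crown n}
    (p : Quiver.Path x y) (e : y ⟶ z) (g : G) :
    crownPathChar χ (p.cons e) g = crownPathChar χ p g * χ _ _ e g := by
  simp [crownPathChar]

lemma crownPathChar_comp (χ : ∀ x y : Crown n, (x ⟶ y) → (G →* kˣ)) {x y z : Crown n}
    (p : Quiver.Path x y) (q : Quiver.Path y z) (g : G) :
    crownPathChar χ (p.comp q) g = crownPathChar χ p g * crownPathChar χ q g := by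
  induction q with
  | nil => simp [crownPathChar]
  | cons q e ih => simp [Quiver.Path.comp_cons, crownPathChar_cons, ih, mul_assoc]

lemma crownPathChar_pow (χ : ∀ x y : Crown n, (x ⟶ y) → (G →* kˣ)) {x y : Crown n}
    (p : Quiver.Path x y) (g : G) (m : ℕ) :
    crownPathChar χ p (g ^ m) = crownPathChar χ p g ^ m := by
  induction p with
  | nil => simp [crownPathChar]
  | cons p e ih => simp [crownPathChar_cons, ih, mul_pow, map_pow]

lemma crownPathChar_one (χ : ∀ x y : Crown n, (x ⟶ y) → (G →* kˣ)) {x y : Crown n}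
    (p : Quiver.Path x y) : crownPathChar χ p (1 : G) = 1 := by
  induction p with
  | nil => simp [crownPathChar]
  | cons p e ih => simp [crownPathChar_cons, ih]

lemma crownChar_congr (χ : ∀ x y : Crown n, (x ⟶ y) → (G →* kˣ)) {x : Crown n}
    {s t : Σ y : Crown n, Quiver.Path x y} (h : s = t) (g : G) :
    crownPathChar χ s.2 g = crownPathChar χ t.2 g := by subst h; rfl

lemma crownChar_base_congr (χ : ∀ x y : Crown n, (x ⟶ y) → (G →* kˣ)) {v w : Crown n}
    (h : v = w) (L : ℕ) (g : G) :
    crownPathChar χ (crownPth v L).2 g = crownPathChar χ (crownPth w L).2 g := by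
  subst h; rfl

lemma crownPathChar_cast (χ : ∀ x y : Crown n, (x ⟶ y) → (G →* kˣ)) {a b c : Crown n}
    (h : b = c) (p : Quiver.Path a b) (g : G) :
    crownPathChar χ (crownCast h p) g = crownPathChar χ p g := by subst h; rfl

lemma crown_len_cast {a b c : Crown n} (h : b = c) (p : Quiver.Path a b) :
    (crownCast h p).length = p.length := by subst h; rfl

lemma crown_cast_comp {a b c d : Crown n} (h : c = d) (p : Quiver.Path a b)
    (q : Quiver.Path b c) : crownCast h (p.comp q) = p.comp (crownCast h q) := by
  subst h; rfl

lemma crown_sigma_snd {x z : Crown n} {s : Σ y : Crown n, Quiver.Path x y}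
    {q : Quiver.Path x z} (h : s = ⟨z, q⟩) :
    s.2 = crownCast (congrArg Sigma.fst h).symm q := by subst h; rfl

lemma crown_target_eq {x : Crown n} {y : Crown n} (p : Quiver.Path y x) :
    y = x - (p.length : ZMod n) := by
  have h : x = y + (p.length : ZMod n) := by
    simpa [crownPth_fst] using congrArg Sigma.fst (crown_path_eq_pth p)
  exact eq_sub_of_add_eq h.symm

lemma crown_into_eq {x : Crown n} {y z : Crown n} (p : Quiver.Path y x) (q : Quiver.Path z x)
    (h : p.length = q.length) : (⟨y, p⟩ : Σ v : Crown n, Quiver.Path v x) = ⟨z, q⟩ := by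
  have hy := crown_target_eq p
  have hz := crown_target_eq q
  rw [h] at hy
  have hyz : y = z := hy.trans hz.symm
  subst hyz
  have h1 := crown_path_eq_pth p
  have h2 := crown_path_eq_pth q
  rw [← h] at h2
  have h3 := h1.trans h2.symm
  obtain ⟨-, h4⟩ := Sigma.mk.inj_iff.mp h3
  rw [eq_of_heq h4]

end

/-- On an oriented crown with a homogeneous action of a finite group, each vertex is
the source of exactly one irreducible invariant path, and the target of exactly one
irreducible invariant path; consequently the bases-quiver of the invariant category
is a disjoint union of oriented crowns. -/
theorem crown_unique_irreducible_invariant_path_at_each_vertex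
    {k G : Type} [Field k] [Group G] [Finite G] {n : ℕ} [NeZero n]
    (χ : ∀ x y : Crown n, (x ⟶ y) → (G →* kˣ)) (x : Crown n) :
    (∃! s : Σ y : Crown n, Quiver.Path x y, CrownIrrInvPath χ s.2) ∧
    (∃! s : Σ y : Crown n, Quiver.Path y x, CrownIrrInvPath χ s.2) := by
  classical
  have hcard : 0 < Nat.card G := Nat.card_pos
  have hn : 0 < n := Nat.pos_of_ne_zero (NeZero.ne n)
  have hsplit : ∀ (v : Crown n) (L M : ℕ) (g : G),
      crownPathChar χ (crownPth v (L + M)).2 g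
        = crownPathChar χ (crownPth v L).2 g *
          crownPathChar χ (crownPth (crownPth v L).1 M).2 g := by
    intro v L M g
    rw [crownChar_congr χ (crownPth_add v L M) g]
    exact crownPathChar_comp χ _ _ g
  have hvn : ∀ (v : Crown n) (m : ℕ), (crownPth v (m * n)).1 = v := by
    intro v m
    rw [crownPth_fst,
      (ZMod.natCast_eq_zero_iff (m * n) n).mpr (dvd_mul_left n m), add_zero]
  have hGn : ∀ (v : Crown n) (g : G),
      crownPathChar χ (crownPth v (Nat.card G * n)).2 g = 1 := by
    intro v g
    have key : ∀ m : ℕ, crownPathChar χ (crownPth v (m * n)).2 g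
        = crownPathChar χ (crownPth v n).2 g ^ m := by
      intro m
      induction m with
      | zero => rw [Nat.zero_mul]; simp [crownPth, crownPathChar]
      | succ m ih =>
        rw [Nat.succ_mul, hsplit v (m * n) n g, ih,
          crownChar_base_congr χ (hvn v m) n g, pow_succ]
    rw [key, ← crownPathChar_pow, pow_card_eq_one', crownPathChar_one]
  constructor
  · -- source case
    have hex : ∃ L : ℕ, 0 < L ∧ ∀ g : G, crownPathChar χ (crownPth x L).2 g = 1 :=
      ⟨Nat.card G * n, Nat.mul_pos hcard hn, fun g => hGn x g⟩
    obtain ⟨L, hLdef⟩ : ∃ L : ℕ, L = Nat.find hex := ⟨_, rfl⟩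
    obtain ⟨hLpos, hLinv⟩ : 0 < L ∧ ∀ g : G, crownPathChar χ (crownPth x L).2 g = 1 :=
      hLdef ▸ Nat.find_spec hex
    have hLmin : ∀ m : ℕ, m < L →
        ¬(0 < m ∧ ∀ g : G, crownPathChar χ (crownPth x m).2 g = 1) := by
      rw [hLdef]; exact fun m hm => Nat.find_min hex hm
    have hLle : ∀ m : ℕ, 0 < m →
        (∀ g : G, crownPathChar χ (crownPth x m).2 g = 1) → L ≤ m := by
      rw [hLdef]; exact fun m h1 h2 => Nat.find_min' hex ⟨h1, h2⟩
    have hwit : CrownIrrInvPath χ (crownPth x L).2 := by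
      refine ⟨hLinv, ?_, ?_⟩
      · rw [crownPth_len]; exact hLpos
      · rintro ⟨z, w₁, w₂, h1, h2, hi1, hi2, hcmp⟩
        have hinv1 : ∀ g, crownPathChar χ (crownPth x w₁.length).2 g = 1 := fun g =>
          (crownChar_congr χ (crown_path_eq_pth w₁) g).symm.trans (hi1 g)
        have hlen := congrArg Quiver.Path.length hcmp
        rw [crownPth_len, Quiver.Path.length_comp] at hlen
        exact hLmin _ (by omega) ⟨h1, hinv1⟩
    refine ⟨crownPth x L, hwit, ?_⟩
    rintro ⟨y, p⟩ ⟨hinv, hpos, hirr⟩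
    have hs := crown_path_eq_pth p
    have hinv' : ∀ g, crownPathChar χ (crownPth x p.length).2 g = 1 := fun g =>
      (crownChar_congr χ hs g).symm.trans (hinv g)
    have hle : L ≤ p.length := hLle _ hpos hinv'
    rcases eq_or_lt_of_le hle with heq | hlt
    · rw [hs, ← heq]
    · exfalso
      have hdec := crownPth_add x L (p.length - L)
      rw [Nat.add_sub_cancel' hle] at hdec
      have h2 : (⟨y, p⟩ : Σ y : Crown n, Quiver.Path x y)
          = ⟨_, (crownPth x L).2.comp (crownPth (crownPth x L).1 (p.length - L)).2⟩ :=
        hs.trans hdec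
      have hzy : (crownPth (crownPth x L).1 (p.length - L)).1 = y :=
        (congrArg Sigma.fst h2).symm
      have hp : p = (crownPth x L).2.comp
          (crownCast hzy (crownPth (crownPth x L).1 (p.length - L)).2) :=
        (crown_sigma_snd h2).trans (crown_cast_comp hzy _ _)
      apply hirr
      refine ⟨(crownPth x L).1, (crownPth x L).2,
        crownCast hzy (crownPth (crownPth x L).1 (p.length - L)).2, ?_, ?_, hLinv, ?_, hp⟩
      · rw [crownPth_len]; exact hLpos
      · rw [crown_len_cast, crownPth_len]; omega
      · intro g
        have hc := crownPathChar_comp χ (crownPth x L).2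
          (crownCast hzy (crownPth (crownPth x L).1 (p.length - L)).2) g
        rw [← hp, hinv g, hLinv g, one_mul] at hc
        exact hc.symm
  · -- target case
    have hM0 : ((Nat.card G * n : ℕ) : ZMod n) = 0 :=
      (ZMod.natCast_eq_zero_iff _ n).mpr (dvd_mul_left n _)
    have hex : ∃ M : ℕ, 0 < M ∧
        ∀ g : G, crownPathChar χ (crownPth (x - (M : ZMod n)) M).2 g = 1 := by
      refine ⟨Nat.card G * n, Nat.mul_pos hcard hn, ?_⟩
      rw [hM0, sub_zero]
      exact fun g => hGn x g
    obtain ⟨M, hMdef⟩ : ∃ M : ℕ, M = Nat.find hex := ⟨_, rfl⟩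
    obtain ⟨hMpos, hMinv⟩ : 0 < M ∧
        ∀ g : G, crownPathChar χ (crownPth (x - (M : ZMod n)) M).2 g = 1 :=
      hMdef ▸ Nat.find_spec hex
    have hMmin : ∀ m : ℕ, m < M →
        ¬(0 < m ∧ ∀ g : G, crownPathChar χ (crownPth (x - (m : ZMod n)) m).2 g = 1) := by
      rw [hMdef]; exact fun m hm => Nat.find_min hex hm
    have hMle : ∀ m : ℕ, 0 < m →
        (∀ g : G, crownPathChar χ (crownPth (x - (m : ZMod n)) m).2 g = 1) → M ≤ m := by
      rw [hMdef]; exact fun m h1 h2 => Nat.find_min' hex ⟨h1, h2⟩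
    have hfst : (crownPth (x - (M : ZMod n)) M).1 = x := by rw [crownPth_fst]; ring
    obtain ⟨wq, hwq⟩ : ∃ q : Quiver.Path (x - (M : ZMod n)) x,
        q = crownCast hfst (crownPth (x - (M : ZMod n)) M).2 := ⟨_, rfl⟩
    have hwqchar : ∀ g, crownPathChar χ wq g = 1 := by
      intro g; rw [hwq, crownPathChar_cast]; exact hMinv g
    have hwqlen : wq.length = M := by rw [hwq, crown_len_cast, crownPth_len]
    have hwit : CrownIrrInvPath χ wq := by
      refine ⟨hwqchar, by rw [hwqlen]; exact hMpos, ?_⟩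
      rintro ⟨z, w₁, w₂, h1, h2, hi1, hi2, hcmp⟩
      have hz : z = x - (w₂.length : ZMod n) := crown_target_eq w₂
      have hinv2 : ∀ g,
          crownPathChar χ (crownPth (x - (w₂.length : ZMod n)) w₂.length).2 g = 1 := fun g =>
        (crownChar_base_congr χ hz.symm w₂.length g).trans
          ((crownChar_congr χ (crown_path_eq_pth w₂) g).symm.trans (hi2 g))
      have hlen := congrArg Quiver.Path.length hcmp
      rw [hwqlen, Quiver.Path.length_comp] at hlen
      exact hMmin _ (by omega) ⟨h2, hinv2⟩
    refine ⟨⟨x - (M : ZMod n), wq⟩, hwit, ?_⟩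
    rintro ⟨y, p⟩ ⟨hinv, hpos, hirr⟩
    have hy : y = x - (p.length : ZMod n) := crown_target_eq p
    have hinv' : ∀ g,
        crownPathChar χ (crownPth (x - (p.length : ZMod n)) p.length).2 g = 1 := fun g =>
      (crownChar_base_congr χ hy.symm p.length g).trans
        ((crownChar_congr χ (crown_path_eq_pth p) g).symm.trans (hinv g))
    have hle : M ≤ p.length := hMle _ hpos hinv'
    rcases eq_or_lt_of_le hle with heq | hlt
    · exact crown_into_eq p wq (by rw [hwqlen, ← heq])
    · exfalso
      have hdec := crownPth_add y (p.length - M) M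
      rw [Nat.sub_add_cancel hle] at hdec
      have h2 : (⟨x, p⟩ : Σ t : Crown n, Quiver.Path y t)
          = ⟨_, (crownPth y (p.length - M)).2.comp
              (crownPth (crownPth y (p.length - M)).1 M).2⟩ :=
        (crown_path_eq_pth p).trans hdec
      have hzx : (crownPth (crownPth y (p.length - M)).1 M).1 = x :=
        (congrArg Sigma.fst h2).symm
      have hp : p = (crownPth y (p.length - M)).2.comp
          (crownCast hzx (crownPth (crownPth y (p.length - M)).1 M).2) :=
        (crown_sigma_snd h2).trans (crown_cast_comp hzx _ _)
      have hmid : (crownPth y (p.length - M)).1 = x - (M : ZMod n) := by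
        rw [crownPth_fst, Nat.cast_sub hle]
        linear_combination hy
      have hinvB : ∀ g, crownPathChar χ
          (crownCast hzx (crownPth (crownPth y (p.length - M)).1 M).2) g = 1 := by
        intro g
        rw [crownPathChar_cast, crownChar_base_congr χ hmid M g]
        exact hMinv g
      apply hirr
      refine ⟨(crownPth y (p.length - M)).1, (crownPth y (p.length - M)).2,
        crownCast hzx (crownPth (crownPth y (p.length - M)).1 M).2, ?_, ?_, ?_, hinvB, hp⟩
      · rw [crownPth_len]; omega
      · rw [crown_len_cast, crownPth_len]; exact hMpos
      · intro g
        have hc := crownPathChar_comp χ (crownPth y (p.length - M)).2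
          (crownCast hzx (crownPth (crownPth y (p.length - M)).1 M).2) g
        rw [← hp, hinv g, hinvB g, mul_one] at hc
        exact hc.symm
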